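/- For all integers m, n and natural number k, Σ_{i=0}^{k} C(m+1, k-i)·C(n+1, i)·C(m-k+i+1, 3)·δ_{m+n-k,0} = C(m+1, 3)·δ_{m+n,0}·δ_{k,0}, where δ denotes the Kronecker delta. -/

import Mathlib

open Finset

private lemma choose_swap (a : ℤ) (j : ℕ) :
    Ring.choose a j * Ring.choose (a - (j : ℤ)) 3 =
      Ring.choose a 3 * Ring.choose (a - 3) j := by
  have h1 := Ring.choose_smul_choose a (Nat.le_add_right j 3)
  have h2 := Ring.choose_smul_choose a (show 3 ≤ j + 3 by omega)
  rw [Nat.add_sub_cancel_left] at h1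
  have h3 : j + 3 - 3 = j := by omega
  rw [h3] at h2
  have hsym : (j + 3).choose j = (j + 3).choose 3 := by
    rw [← Nat.choose_symm (by omega : 3 ≤ j + 3), h3]
  rw [hsym] at h1
  exact_mod_cast h1.symm.trans h2

private lemma key (a b : ℤ) (k : ℕ) :
    (∑ i ∈ Finset.range (k + 1),
        Ring.choose a (k - i) * Ring.choose b i * Ring.choose (a - (k : ℤ) + (i : ℤ)) 3) =
      Ring.choose a 3 * Ring.choose (b + (a - 3)) k := by
  have vdm := Ring.add_choose_eq (r := b) (s := a - 3) k (Commute.all _ _)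
  rw [Finset.Nat.sum_antidiagonal_eq_sum_range_succ_mk] at vdm
  rw [vdm, Finset.mul_sum]
  refine Finset.sum_congr rfl fun i hi => ?_
  have hik : i ≤ k := by simpa [Nat.lt_succ_iff] using Finset.mem_range.mp hi
  have hcast : a - (k : ℤ) + (i : ℤ) = a - ((k - i : ℕ) : ℤ) := by
    push_cast [hik]; ring
  rw [hcast]
  rw [mul_right_comm, choose_swap a (k - i)]
  ring

/-- For all integers `m, n` and natural number `k`,
`Σ_{i=0}^{k} C(m+1, k-i)·C(n+1, i)·C(m-k+i+1, 3)·δ_{m+n-k,0}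
  = C(m+1, 3)·δ_{m+n,0}·δ_{k,0}`,
where `C` is the binomial coefficient with integer upper argument and `δ` the
Kronecker delta. -/
theorem statement1 (m n : ℤ) (k : ℕ) :
    (∑ i ∈ Finset.range (k + 1),
        Ring.choose (m + 1) (k - i) * Ring.choose (n + 1) i *
          Ring.choose (m - (k : ℤ) + (i : ℤ) + 1) 3 *
            (if m + n - (k : ℤ) = 0 then (1 : ℤ) else 0)) =
      Ring.choose (m + 1) 3 * (if m + n = 0 then (1 : ℤ) else 0) *
        (if k = 0 then (1 : ℤ) else 0) := by
  rcases Nat.eq_zero_or_pos k with hk | hk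
  · subst hk
    simp [Ring.choose_zero_right]
  · rw [if_neg (show ¬k = 0 by omega), mul_zero]
    by_cases hmn : m + n - (k : ℤ) = 0
    · simp only [hmn, eq_self_iff_true, if_true, mul_one]
      have hterms : ∀ i ∈ Finset.range (k + 1),
          Ring.choose (m + 1) (k - i) * Ring.choose (n + 1) i *
            Ring.choose (m - (k : ℤ) + (i : ℤ) + 1) 3 =
          Ring.choose (m + 1) (k - i) * Ring.choose (n + 1) i *
            Ring.choose ((m + 1) - (k : ℤ) + (i : ℤ)) 3 := by
        intro i _; ring_nf
      rw [Finset.sum_congr rfl hterms, key (m + 1) (n + 1) k]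
      have hb : (n + 1) + ((m + 1) - 3) = ((k - 1 : ℕ) : ℤ) := by
        push_cast [Nat.one_le_iff_ne_zero.mpr (by omega : k ≠ 0)]
        omega
      rw [hb, Ring.choose_natCast]
      rw [Nat.choose_eq_zero_of_lt (by omega)]
      simp
    · simp [hmn]
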